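/- For the least-squares loss L(r) = ½‖P_o v(r) - y‖², the gradient with respect to r equals diag(i) (I - Ω_{A/R}ᵀ) P_oᵀ (P_o v - y), where v = -Ω_{A/R} s and i = R⁻¹ v. -/

import Mathlib

open Matrix

noncomputable def OmMat {C E : ℕ} (A : Matrix (Fin C) (Fin E) ℝ) (r : Fin E → ℝ) :
    Matrix (Fin E) (Fin E) ℝ :=
  Matrix.diagonal r * Aᵀ * (A * Matrix.diagonal r * Aᵀ)⁻¹ * A

noncomputable def vMap {C E : ℕ} (A : Matrix (Fin C) (Fin E) ℝ) (r : Fin E → ℝ)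
    (s : Fin E → ℝ) : Fin E → ℝ :=
  -(OmMat A r *ᵥ s)

noncomputable def iMap {C E : ℕ} (A : Matrix (Fin C) (Fin E) ℝ) (r : Fin E → ℝ)
    (s : Fin E → ℝ) : Fin E → ℝ :=
  (Matrix.diagonal r)⁻¹ *ᵥ vMap A r s

noncomputable def lsLoss {C E t : ℕ} (A : Matrix (Fin C) (Fin E) ℝ)
    (Po : Matrix (Fin t) (Fin E) ℝ) (y : Fin t → ℝ) (s : Fin E → ℝ)
    (r : Fin E → ℝ) : ℝ :=
  (1 / 2) * ∑ j, (Po *ᵥ vMap A r s - y) j ^ 2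

section Aux

attribute [local instance] Matrix.linftyOpNormedRing Matrix.linftyOpNormedAlgebra

/-- full row rank + positive diagonal makes `A R Aᵀ` invertible. -/
lemma aux_isUnit_M {C E : ℕ} (A : Matrix (Fin C) (Fin E) ℝ) (r : Fin E → ℝ)
    (hA : A.rank = C) (hr : ∀ e, 0 < r e) :
    IsUnit (A * Matrix.diagonal r * Aᵀ) := by
  have hAinj : Function.Injective A.vecMul := by
    rw [Matrix.vecMul_injective_iff]
    rw [linearIndependent_iff_card_eq_finrank_span]
    rw [Set.finrank, ← Matrix.rank_eq_finrank_span_row, hA, Fintype.card_fin]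
  rw [← Matrix.vecMul_injective_iff_isUnit]
  have hker : ∀ x : Fin C → ℝ, x ᵥ* (A * Matrix.diagonal r * Aᵀ) = 0 → x = 0 := by
    intro x hx
    have h0 : x ⬝ᵥ ((A * Matrix.diagonal r * Aᵀ) *ᵥ x) = 0 := by
      rw [dotProduct_mulVec, hx, zero_dotProduct]
    have hexp : x ⬝ᵥ ((A * Matrix.diagonal r * Aᵀ) *ᵥ x)
        = ∑ e, r e * (x ᵥ* A) e ^ 2 := by
      rw [← Matrix.mulVec_mulVec, ← Matrix.mulVec_mulVec, Matrix.mulVec_transpose,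
        dotProduct_mulVec, dotProduct_mulVec]
      simp [Matrix.vecMul_diagonal, dotProduct]
      ring_nf
      refine Finset.sum_congr rfl fun e _ => by ring
    have hz : ∀ e, (x ᵥ* A) e = 0 := by
      intro e
      have hnn : ∀ e ∈ Finset.univ, (0:ℝ) ≤ r e * (x ᵥ* A) e ^ 2 :=
        fun e _ => mul_nonneg (hr e).le (sq_nonneg _)
      have := (Finset.sum_eq_zero_iff_of_nonneg hnn).mp (hexp ▸ h0) e (Finset.mem_univ e)
      have := (mul_eq_zero.mp this).resolve_left (hr e).ne'
      exact pow_eq_zero_iff (n := 2) (by norm_num) |>.mp this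
    have : x ᵥ* A = 0 := funext hz
    apply hAinj
    show x ᵥ* A = (0 : Fin C → ℝ) ᵥ* A
    rw [this, Matrix.zero_vecMul]
  intro x y hxy
  have h := hker (x - y) ?_
  · exact sub_eq_zero.mp h
  · show (x - y) ᵥ* _ = 0
    rw [Matrix.sub_vecMul]
    have : x ᵥ* (A * Matrix.diagonal r * Aᵀ) = y ᵥ* (A * Matrix.diagonal r * Aᵀ) := hxy
    rw [this, sub_self]

/-- derivative of the entries of the inverse matrix along the `b`-th diagonal perturbation. -/
lemma aux_inv_entry_hasDerivAt {C E : ℕ} (A : Matrix (Fin C) (Fin E) ℝ) (r : Fin E → ℝ)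
    (b : Fin E) (hM : IsUnit (A * Matrix.diagonal r * Aᵀ)) (k l : Fin C) :
    HasDerivAt (fun u => (A * Matrix.diagonal (Function.update r b u) * Aᵀ)⁻¹ k l)
      ((-( (A * Matrix.diagonal r * Aᵀ)⁻¹ * (A * Matrix.single b b (1:ℝ) * Aᵀ)
        * (A * Matrix.diagonal r * Aᵀ)⁻¹)) k l) (r b) := by
  set M := A * Matrix.diagonal r * Aᵀ with hMdef
  set N := A * Matrix.single b b (1:ℝ) * Aᵀ with hNdef
  have hdiag : ∀ u : ℝ, Matrix.diagonal (Function.update r b u)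
      = Matrix.diagonal r + (u - r b) • Matrix.single b b (1:ℝ) := by
    intro u
    ext i j
    by_cases hij : i = j
    · subst hij
      by_cases hib : i = b
      · subst hib; simp [Matrix.single, Function.update]
      · simp [Matrix.single, Function.update, hib, Ne.symm hib]
    · simp only [Matrix.diagonal_apply_ne _ hij, Matrix.add_apply, Matrix.smul_apply,
        Matrix.single, Matrix.of_apply, smul_eq_mul]
      rw [if_neg, mul_zero, add_zero]
      rintro ⟨rfl, rfl⟩; exact hij rfl
  have hGaff : ∀ u : ℝ, A * Matrix.diagonal (Function.update r b u) * Aᵀ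
      = (M - r b • N) + u • N := by
    intro u
    rw [hdiag u]
    simp only [Matrix.mul_add, Matrix.add_mul, Matrix.mul_smul, Matrix.smul_mul,
      hMdef, hNdef]
    rw [sub_smul]
    abel
  have hG : HasDerivAt (fun u : ℝ => A * Matrix.diagonal (Function.update r b u) * Aᵀ)
      N (r b) := by
    have : HasDerivAt (fun u : ℝ => (M - r b • N) + u • N) ((1:ℝ) • N) (r b) :=
      ((hasDerivAt_id (r b)).smul_const N).const_add _
    simpa [hGaff] using this
  have hinv : HasDerivAt (fun u : ℝ => (A * Matrix.diagonal (Function.update r b u) * Aᵀ)⁻¹)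
      (-(M⁻¹ * N * M⁻¹)) (r b) := by
    obtain ⟨Mu, hMu⟩ := hM
    have hfd := hasFDerivAt_ringInverse (𝕜 := ℝ) Mu
    have hpt : (Mu : Matrix (Fin C) (Fin C) ℝ)
        = A * Matrix.diagonal (Function.update r b (r b)) * Aᵀ := by
      rw [Function.update_eq_self]; exact hMu.trans hMdef
    rw [hpt] at hfd
    have hcomp := hfd.comp_hasDerivAt (r b) hG
    have hival : ((Mu⁻¹ : (Matrix (Fin C) (Fin C) ℝ)ˣ) : Matrix (Fin C) (Fin C) ℝ)
        = M⁻¹ := by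
      rw [Matrix.nonsing_inv_eq_ringInverse, ← hMu, Ring.inverse_unit]
    have heq : (fun u : ℝ => (A * Matrix.diagonal (Function.update r b u) * Aᵀ)⁻¹)
        = fun u => Ring.inverse (A * Matrix.diagonal (Function.update r b u) * Aᵀ) := by
      funext u; rw [Matrix.nonsing_inv_eq_ringInverse]
    rw [heq]
    refine hcomp.congr_deriv ?_
    simp [hival]
  exact ((Matrix.entryLinearMap ℝ ℝ k l).toContinuousLinearMap.hasFDerivAt.comp_hasDerivAt
    (r b) hinv)

end Aux

lemma aux_vMap_apply {C E : ℕ} (A : Matrix (Fin C) (Fin E) ℝ) (ρ s : Fin E → ℝ) (k : Fin E) :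
    vMap A ρ s k
      = -(ρ k * (Aᵀ *ᵥ ((A * Matrix.diagonal ρ * Aᵀ)⁻¹ *ᵥ (A *ᵥ s))) k) := by
  show (-(((Matrix.diagonal ρ * Aᵀ * (A * Matrix.diagonal ρ * Aᵀ)⁻¹ * A)) *ᵥ s)) k = _
  simp only [← Matrix.mulVec_mulVec, Pi.neg_apply, neg_inj]
  rw [Matrix.mulVec_diagonal]

lemma aux_std_mulVec {E : ℕ} (T : Matrix (Fin E) (Fin E) ℝ) (q0 : Fin E → ℝ) (b k : Fin E) :
    (T *ᵥ (Matrix.single b b (1:ℝ) *ᵥ q0)) k = T k b * q0 b := by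
  have h1 : Matrix.single b b (1:ℝ) *ᵥ q0 = fun l => if l = b then q0 b else 0 := by
    funext l
    simp [Matrix.mulVec, dotProduct, Matrix.single, ite_and, eq_comm]
  rw [h1]
  simp [Matrix.mulVec, dotProduct, Finset.sum_ite_eq]

theorem gradient_of_least_squares_loss
    (C E t : ℕ) (A : Matrix (Fin C) (Fin E) ℝ) (r : Fin E → ℝ) (s : Fin E → ℝ)
    (Po : Matrix (Fin t) (Fin E) ℝ) (y : Fin t → ℝ)
    (hA : A.rank = C) (hr : ∀ e, 0 < r e) :
    ∀ b : Fin E,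
      HasDerivAt (fun u : ℝ => lsLoss A Po y s (Function.update r b u))
        ((Matrix.diagonal (iMap A r s) *ᵥ
          ((1 - (OmMat A r)ᵀ) *ᵥ (Poᵀ *ᵥ (Po *ᵥ vMap A r s - y)))) b) (r b) := by
  intro b
  have hM : IsUnit (A * Matrix.diagonal r * Aᵀ) := aux_isUnit_M A r hA hr
  set M := A * Matrix.diagonal r * Aᵀ with hMdef
  set N := A * Matrix.single b b (1:ℝ) * Aᵀ with hNdef
  set W := -(M⁻¹ * N * M⁻¹) with hWdef
  set c := A *ᵥ s with hcdef
  set T := Aᵀ * M⁻¹ * A with hTdef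
  set q0 : Fin E → ℝ := Aᵀ *ᵥ (M⁻¹ *ᵥ c) with hq0def
  set q' : Fin E → ℝ := Aᵀ *ᵥ (W *ᵥ c) with hq'def
  set dv : Fin E → ℝ := fun k => -((if k = b then (1:ℝ) else 0) * q0 k + r k * q' k)
    with hdvdef
  -- derivative of q entries
  have hq : ∀ k, HasDerivAt
      (fun u => (Aᵀ *ᵥ ((A * Matrix.diagonal (Function.update r b u) * Aᵀ)⁻¹ *ᵥ c)) k)
      (q' k) (r b) := by
    intro k
    have hshape : q' k = ∑ j, Aᵀ k j * ∑ l, W j l * c l := by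
      rw [hq'def]
      simp only [Matrix.mulVec, dotProduct]
    rw [hshape]
    simp only [Matrix.mulVec, dotProduct]
    apply HasDerivAt.fun_sum
    intro j _
    apply HasDerivAt.const_mul
    apply HasDerivAt.fun_sum
    intro l _
    exact (aux_inv_entry_hasDerivAt A r b hM j l).mul_const (c l)
  -- derivative of v entries
  have hv : ∀ k, HasDerivAt (fun u => vMap A (Function.update r b u) s k) (dv k) (r b) := by
    intro k
    have hfun : (fun u => vMap A (Function.update r b u) s k)
        = fun u => -((if k = b then u else r k) *
            (Aᵀ *ᵥ ((A * Matrix.diagonal (Function.update r b u) * Aᵀ)⁻¹ *ᵥ c)) k) := by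
      funext u
      rw [aux_vMap_apply, Function.update_apply]
    rw [hfun]
    have hq0k : (Aᵀ *ᵥ ((A * Matrix.diagonal (Function.update r b (r b)) * Aᵀ)⁻¹ *ᵥ c)) k
        = q0 k := by
      rw [Function.update_eq_self]
    by_cases hk : k = b
    · subst hk
      have h1 := ((hasDerivAt_id (r k)).fun_mul (hq k)).fun_neg
      rw [hq0k] at h1
      simpa [hdvdef] using h1
    · simp only [if_neg hk]
      have h1 := ((hq k).const_mul (r k)).fun_neg
      have e : dv k = -(r k * q' k) := by simp [hdvdef, hk]
      rw [e]; exact h1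
  -- key algebraic identity for dv
  have hq'eq : ∀ k, q' k = -(T k b * q0 b) := by
    intro k
    have hmat : Aᵀ * W * A = -(T * (Matrix.single b b (1:ℝ) * T)) := by
      rw [hWdef, hNdef, hTdef]
      simp only [Matrix.mul_neg, Matrix.neg_mul, Matrix.mul_assoc]
    have hq0T : q0 = T *ᵥ s := by
      rw [hq0def, hTdef, hcdef]
      simp only [← Matrix.mulVec_mulVec, Matrix.mul_assoc]
    calc q' k = ((Aᵀ * W * A) *ᵥ s) k := by
          rw [hq'def, hcdef]; simp only [← Matrix.mulVec_mulVec]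
      _ = (-(T *ᵥ (Matrix.single b b (1:ℝ) *ᵥ (T *ᵥ s)))) k := by
          rw [hmat]; simp only [← Matrix.mulVec_mulVec, Matrix.neg_mulVec]
      _ = -(T k b * q0 b) := by
          rw [Pi.neg_apply, ← hq0T, aux_std_mulVec, hq0T]
  have hvq0 : ∀ k, vMap A r s k = -(r k * q0 k) := by
    intro k
    rw [aux_vMap_apply]
    try rfl
  have hdiaginv : (Matrix.diagonal r)⁻¹ = Matrix.diagonal (fun k => (r k)⁻¹) := by
    apply Matrix.inv_eq_right_inv
    rw [Matrix.diagonal_mul_diagonal]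
    have : (fun i => r i * (r i)⁻¹) = fun _ => (1:ℝ) := by
      funext i; field_simp [(hr i).ne']
    rw [this, Matrix.diagonal_one]
  have hi0 : ∀ k, iMap A r s k = -(q0 k) := by
    intro k
    show ((Matrix.diagonal r)⁻¹ *ᵥ vMap A r s) k = _
    rw [hdiaginv, Matrix.mulVec_diagonal, hvq0 k]
    field_simp [(hr k).ne']
  have hOm : ∀ k, OmMat A r k b = r k * T k b := by
    intro k
    show (Matrix.diagonal r * Aᵀ * M⁻¹ * A) k b = _
    rw [hTdef]
    have : Matrix.diagonal r * Aᵀ * M⁻¹ * A = Matrix.diagonal r * (Aᵀ * M⁻¹ * A) := by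
      simp only [Matrix.mul_assoc]
    rw [this, Matrix.diagonal_mul]
  have hkey : ∀ k, dv k = iMap A r s b * ((1 - OmMat A r) k b) := by
    intro k
    have hdvk : dv k = -((if k = b then (1:ℝ) else 0) * q0 k + r k * q' k) := rfl
    rw [hdvk, hq'eq k, hi0 b, Matrix.sub_apply, Matrix.one_apply, hOm k]
    by_cases hk : k = b
    · subst hk; simp; ring
    · simp [hk]; ring
  -- derivative of the loss
  have hloss : (fun u : ℝ => lsLoss A Po y s (Function.update r b u))
      = fun u => (1/2 : ℝ) * ∑ j, ((∑ k, Po j k * vMap A (Function.update r b u) s k) - y j)^2 := by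
    funext u
    simp [lsLoss, Matrix.mulVec, dotProduct]
  have hD : HasDerivAt (fun u : ℝ => lsLoss A Po y s (Function.update r b u))
      ((1/2 : ℝ) * ∑ j, ((2:ℕ) * ((∑ k, Po j k * vMap A r s k) - y j)^1 *
        (∑ k, Po j k * dv k))) (r b) := by
    rw [hloss]
    apply HasDerivAt.const_mul
    apply HasDerivAt.fun_sum
    intro j _
    have hin : HasDerivAt
        (fun u => (∑ k, Po j k * vMap A (Function.update r b u) s k) - y j)
        (∑ k, Po j k * dv k) (r b) := by
      apply HasDerivAt.sub_const
      apply HasDerivAt.fun_sum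
      intro k _
      exact (hv k).const_mul (Po j k)
    have := hin.fun_pow 2
    rw [Function.update_eq_self] at this
    exact this
  convert hD using 1
  -- final rearrangement
  have hrhs : (Matrix.diagonal (iMap A r s) *ᵥ
      ((1 - (OmMat A r)ᵀ) *ᵥ (Poᵀ *ᵥ (Po *ᵥ vMap A r s - y)))) b
      = iMap A r s b * ∑ k, ((1 - OmMat A r) k b) *
          ∑ j, Po j k * ((∑ k', Po j k' * vMap A r s k') - y j) := by
    rw [Matrix.mulVec_diagonal]
    congr 1
    have h1 : (1 - (OmMat A r)ᵀ) = (1 - OmMat A r)ᵀ := by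
      rw [Matrix.transpose_sub, Matrix.transpose_one]
    rw [h1]
    simp [Matrix.mulVec, dotProduct, Matrix.transpose_apply, Finset.mul_sum]
  rw [hrhs]
  simp only [hkey, pow_one]
  simp only [Finset.mul_sum]
  rw [Finset.sum_comm]
  apply Finset.sum_congr rfl
  intro j _
  apply Finset.sum_congr rfl
  intro k _
  push_cast
  ring
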